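/- Let A be a commutative ring and a₀, a₁, …, a_r ∈ A a regular sequence generating an ideal I. Then the Rees algebra A[It] is isomorphic, via Xᵢ ↦ aᵢt, to the quotient of the polynomial ring A[X₀, …, X_r] by the ideal generated by the 2×2 minors aᵢXⱼ − aⱼXᵢ (0 ≤ i < j ≤ r) of the matrix with rows (a₀, …, a_r) and (X₀, …, X_r). -/

import Mathlib

namespace ReesPresentationAux

open MvPolynomial

variable {A : Type*} [CommRing A] {n : ℕ}

/-- The ideal generated by the first `m` elements of the sequence. -/
def pIdeal (a : Fin n → A) (m : ℕ) : Ideal A := Ideal.span (a '' {i : Fin n | (i : ℕ) < m})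

/-- The ideal of Koszul relations among the first `m` elements. -/
noncomputable def kIdeal (a : Fin n → A) (m : ℕ) : Ideal (MvPolynomial (Fin n) A) :=
  Ideal.span {p | ∃ i j : Fin n, (i : ℕ) < m ∧ (j : ℕ) < m ∧
    p = C (a i) * X j - C (a j) * X i}

/-- The set of variables of index `< m`. -/
def vSet (n m : ℕ) : Set (Fin n) := {i | (i : ℕ) < m}

lemma a_mem_pIdeal {a : Fin n → A} {m : ℕ} {i : Fin n} (h : (i : ℕ) < m) :
    a i ∈ pIdeal a m :=
  Ideal.subset_span ⟨i, h, rfl⟩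

lemma kIdeal_mono (a : Fin n → A) {m m' : ℕ} (h : m ≤ m') : kIdeal a m ≤ kIdeal a m' := by
  apply Ideal.span_mono
  rintro p ⟨i, j, hi, hj, rfl⟩
  exact ⟨i, j, lt_of_lt_of_le hi h, lt_of_lt_of_le hj h, rfl⟩

lemma gen_mem_kIdeal {a : Fin n → A} {m : ℕ} {i j : Fin n}
    (hi : (i : ℕ) < m) (hj : (j : ℕ) < m) :
    C (a i) * X j - C (a j) * X i ∈ kIdeal a m :=
  Ideal.subset_span ⟨i, j, hi, hj, rfl⟩

lemma coeff_mem_of_mem_kIdeal {a : Fin n → A} {m : ℕ} {F : MvPolynomial (Fin n) A}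
    (hF : F ∈ kIdeal a m) (α : Fin n →₀ ℕ) : coeff α F ∈ pIdeal a m := by
  classical
  refine Submodule.span_induction (p := fun F _ => ∀ α, coeff α F ∈ pIdeal a m)
    ?_ ?_ ?_ ?_ hF α
  · rintro _ ⟨i, j, hi, hj, rfl⟩ α
    rw [coeff_sub, coeff_C_mul, coeff_C_mul]
    exact sub_mem (Ideal.mul_mem_right _ _ (a_mem_pIdeal hi))
      (Ideal.mul_mem_right _ _ (a_mem_pIdeal hj))
  · intro α; simp
  · intro x y _ _ hx hy α
    rw [coeff_add]; exact add_mem (hx α) (hy α)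
  · intro q x _ hx α
    rw [smul_eq_mul, coeff_mul]
    exact Ideal.sum_mem _ fun c _ => Ideal.mul_mem_left _ _ (hx c.2)

lemma prod_pow_mem (a : Fin n → A) (m : ℕ) (t : Finset (Fin n)) (f : Fin n → ℕ)
    (ht : ∀ i ∈ t, (i : ℕ) < m) :
    (∏ i ∈ t, a i ^ f i) ∈ pIdeal a m ^ (∑ i ∈ t, f i) := by
  classical
  induction t using Finset.induction_on with
  | empty => simp [Ideal.one_eq_top]
  | @insert j t' hns ih =>
    rw [Finset.prod_insert hns, Finset.sum_insert hns, pow_add]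
    exact Ideal.mul_mem_mul
      (Ideal.pow_mem_pow (a_mem_pIdeal (ht j (Finset.mem_insert_self _ _))) _)
      (ih fun j hj => ht j (Finset.mem_insert_of_mem hj))

lemma mem_vSet_of_supported {s : Set (Fin n)} {F : MvPolynomial (Fin n) A}
    (hF : F ∈ supported A s) {α : Fin n →₀ ℕ} (hα : α ∈ F.support) {i : Fin n}
    (hi : i ∈ α.support) : i ∈ s :=
  (mem_supported.mp hF) (Finset.mem_coe.mpr ((mem_vars i).mpr ⟨α, hα, hi⟩))

lemma degree_of_coeff_ne_zero {F : MvPolynomial (Fin n) A} {e : ℕ}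
    (hF : F.IsHomogeneous e) {α : Fin n →₀ ℕ} (h : coeff α F ≠ 0) :
    α.degree = e := by
  by_contra hne
  exact h (hF.coeff_eq_zero hne)

lemma aeval_mem_of_homogeneous (a : Fin n → A) {m e : ℕ} {T : Ideal A}
    {F : MvPolynomial (Fin n) A} (hhom : F.IsHomogeneous e)
    (hsup : F ∈ supported A (vSet n m)) (hcoeff : ∀ α, coeff α F ∈ T) :
    MvPolynomial.aeval a F ∈ T * pIdeal a m ^ e := by
  classical
  rw [F.as_sum, map_sum]
  refine Ideal.sum_mem _ fun α hα => ?_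
  rw [aeval_monomial]
  have hdeg : α.degree = e := degree_of_coeff_ne_zero hhom (mem_support_iff.mp hα)
  have hprod : (α.prod fun i k => a i ^ k) ∈ pIdeal a m ^ e := by
    rw [Finsupp.prod, ← hdeg]
    exact prod_pow_mem a m _ _ fun i hi => mem_vSet_of_supported hsup hα hi
  simpa using Ideal.mul_mem_mul (hcoeff α) hprod

lemma aeval_mem_pow (a : Fin n → A) {m e : ℕ} {F : MvPolynomial (Fin n) A}
    (hhom : F.IsHomogeneous e) (hsup : F ∈ supported A (vSet n m)) :
    MvPolynomial.aeval a F ∈ pIdeal a m ^ e := by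
  have := aeval_mem_of_homogeneous a (T := ⊤) hhom hsup fun α => trivial
  simpa [Ideal.top_mul] using this

lemma X_mem_supported'' {s : Set (Fin n)} {i : Fin n} (h : i ∈ s) :
    (X i : MvPolynomial (Fin n) A) ∈ supported A s := by
  show X i ∈ Algebra.adjoin A (MvPolynomial.X '' s)
  exact Algebra.subset_adjoin ⟨i, h, rfl⟩

lemma monomial_mem_supported {s : Set (Fin n)} {α : Fin n →₀ ℕ} (c : A)
    (h : ∀ i ∈ α.support, i ∈ s) : monomial α c ∈ supported A s := by
  rw [monomial_eq]
  refine Subalgebra.mul_mem _ ?_ ?_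
  · rw [← MvPolynomial.algebraMap_eq]
    exact Subalgebra.algebraMap_mem _ _
  · rw [Finsupp.prod]
    exact Subalgebra.prod_mem _ fun i hi => pow_mem (X_mem_supported'' (h i hi)) _

lemma exists_homogeneous_rep (a : Fin n → A) (m : ℕ) :
    ∀ (d : ℕ) {x : A}, x ∈ pIdeal a m ^ d →
    ∃ P : MvPolynomial (Fin n) A, P.IsHomogeneous d ∧ P ∈ supported A (vSet n m) ∧
      MvPolynomial.aeval a P = x := by
  intro d
  induction d with
  | zero =>
    intro x _
    refine ⟨C x, isHomogeneous_C _ _, ?_, by simp⟩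
    rw [← MvPolynomial.algebraMap_eq]
    exact Subalgebra.algebraMap_mem _ _
  | succ d ih =>
    intro x hx
    rw [pow_succ] at hx
    refine Submodule.mul_induction_on hx ?_ ?_
    · intro p hp q hq
      obtain ⟨P, hP1, hP2, hP3⟩ := ih hp
      have hL : ∃ L : MvPolynomial (Fin n) A, L.IsHomogeneous 1 ∧
          L ∈ supported A (vSet n m) ∧ MvPolynomial.aeval a L = q := by
        refine Submodule.span_induction (p := fun q _ => ∃ L : MvPolynomial (Fin n) A,
          L.IsHomogeneous 1 ∧ L ∈ supported A (vSet n m) ∧ MvPolynomial.aeval a L = q)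
          ?_ ?_ ?_ ?_ hq
        · rintro _ ⟨i, hi, rfl⟩
          exact ⟨X i, isHomogeneous_X _ _, X_mem_supported'' hi, aeval_X _ _⟩
        · exact ⟨0, isHomogeneous_zero _ _ _, zero_mem _, map_zero _⟩
        · rintro x y _ _ ⟨L1, h11, h12, h13⟩ ⟨L2, h21, h22, h23⟩
          exact ⟨L1 + L2, h11.add h21, add_mem h12 h22, by rw [map_add, h13, h23]⟩
        · rintro r x _ ⟨L, h1, h2, h3⟩
          refine ⟨C r * L, ?_, Subalgebra.mul_mem _ (by
            rw [← MvPolynomial.algebraMap_eq]; exact Subalgebra.algebraMap_mem _ _) h2,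
            by rw [map_mul, aeval_C, h3]; simp [smul_eq_mul]⟩
          have := (isHomogeneous_C (Fin n) r).mul h1
          simpa using this
      obtain ⟨L, hL1, hL2, hL3⟩ := hL
      exact ⟨P * L, hP1.mul hL1, Subalgebra.mul_mem _ hP2 hL2,
        by rw [map_mul, hP3, hL3]⟩
    · rintro x y ⟨P1, h11, h12, h13⟩ ⟨P2, h21, h22, h23⟩
      exact ⟨P1 + P2, h11.add h21, add_mem h12 h22, by rw [map_add, h13, h23]⟩

lemma descent (a : Fin n → A) {m : ℕ} (hm : m < n) {d : ℕ} {x : A}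
    (hx : x ∈ pIdeal a m ^ (d + 1)) :
    ∃ H W : MvPolynomial (Fin n) A, H.IsHomogeneous d ∧ H ∈ supported A (vSet n m) ∧
      (∀ α, coeff α H ∈ pIdeal a m) ∧ MvPolynomial.aeval a H = x ∧
      W.IsHomogeneous (d + 1) ∧ W ∈ supported A (vSet n m) ∧
      MvPolynomial.aeval a W = x ∧
      X (⟨m, hm⟩ : Fin n) * H - C (a ⟨m, hm⟩) * W ∈ kIdeal a (m + 1) := by
  classical
  rw [pow_succ'] at hx
  refine Submodule.mul_induction_on hx ?_ ?_
  · intro p hp q hq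
    obtain ⟨Q, hQ1, hQ2, hQ3⟩ := exists_homogeneous_rep a m d hq
    refine Submodule.span_induction (p := fun p _ =>
      ∃ H W : MvPolynomial (Fin n) A, H.IsHomogeneous d ∧ H ∈ supported A (vSet n m) ∧
      (∀ α, coeff α H ∈ pIdeal a m) ∧ MvPolynomial.aeval a H = p * q ∧
      W.IsHomogeneous (d + 1) ∧ W ∈ supported A (vSet n m) ∧
      MvPolynomial.aeval a W = p * q ∧
      X (⟨m, hm⟩ : Fin n) * H - C (a ⟨m, hm⟩) * W ∈ kIdeal a (m + 1)) ?_ ?_ ?_ ?_ hp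
    · rintro _ ⟨i, hi, rfl⟩
      refine ⟨C (a i) * Q, X i * Q, ?_, ?_, ?_, ?_, ?_, ?_, ?_, ?_⟩
      · simpa using (isHomogeneous_C (Fin n) (a i)).mul hQ1
      · exact Subalgebra.mul_mem _ (by
          rw [← MvPolynomial.algebraMap_eq]; exact Subalgebra.algebraMap_mem _ _) hQ2
      · intro α
        rw [coeff_C_mul]
        exact Ideal.mul_mem_right _ _ (a_mem_pIdeal hi)
      · rw [map_mul, aeval_C, hQ3]; simp
      · simpa [add_comm] using (isHomogeneous_X A i).mul hQ1
      · exact Subalgebra.mul_mem _ (X_mem_supported'' hi) hQ2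
      · rw [map_mul, aeval_X, hQ3]
      · have : X (⟨m, hm⟩ : Fin n) * (C (a i) * Q) - C (a ⟨m, hm⟩) * (X i * Q)
            = (C (a i) * X (⟨m, hm⟩ : Fin n) - C (a ⟨m, hm⟩) * X i) * Q := by ring
        rw [this]
        exact Ideal.mul_mem_right _ _
          (gen_mem_kIdeal (Nat.lt_succ_of_lt hi) (Nat.lt_succ_self m))
    · refine ⟨0, 0, isHomogeneous_zero _ _ _, zero_mem _, by simp, by simp,
        isHomogeneous_zero _ _ _, zero_mem _, by simp, by simp⟩
    · rintro x y _ _ ⟨H1, W1, h11, h12, h13, h14, h15, h16, h17, h18⟩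
        ⟨H2, W2, h21, h22, h23, h24, h25, h26, h27, h28⟩
      refine ⟨H1 + H2, W1 + W2, h11.add h21, add_mem h12 h22,
        fun α => by rw [coeff_add]; exact add_mem (h13 α) (h23 α),
        by rw [map_add, h14, h24, add_mul],
        h15.add h25, add_mem h16 h26, by rw [map_add, h17, h27, add_mul], ?_⟩
      have : X (⟨m, hm⟩ : Fin n) * (H1 + H2) - C (a ⟨m, hm⟩) * (W1 + W2)
          = (X (⟨m, hm⟩ : Fin n) * H1 - C (a ⟨m, hm⟩) * W1)
            + (X (⟨m, hm⟩ : Fin n) * H2 - C (a ⟨m, hm⟩) * W2) := by ring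
      rw [this]
      exact add_mem h18 h28
    · rintro r x _ ⟨H, W, h1, h2, h3, h4, h5, h6, h7, h8⟩
      refine ⟨C r * H, C r * W, by simpa using (isHomogeneous_C (Fin n) r).mul h1,
        Subalgebra.mul_mem _ (by
          rw [← MvPolynomial.algebraMap_eq]; exact Subalgebra.algebraMap_mem _ _) h2,
        fun α => by rw [coeff_C_mul]; exact Ideal.mul_mem_left _ _ (h3 α),
        by rw [map_mul, aeval_C, h4]; simp [smul_eq_mul, mul_assoc],
        by simpa using (isHomogeneous_C (Fin n) r).mul h5,
        Subalgebra.mul_mem _ (by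
          rw [← MvPolynomial.algebraMap_eq]; exact Subalgebra.algebraMap_mem _ _) h6,
        by rw [map_mul, aeval_C, h7]; simp [smul_eq_mul, mul_assoc], ?_⟩
      have : X (⟨m, hm⟩ : Fin n) * (C r * H) - C (a ⟨m, hm⟩) * (C r * W)
          = C r * (X (⟨m, hm⟩ : Fin n) * H - C (a ⟨m, hm⟩) * W) := by ring
      rw [this]
      exact Ideal.mul_mem_left _ _ h8
  · rintro x y ⟨H1, W1, h11, h12, h13, h14, h15, h16, h17, h18⟩
      ⟨H2, W2, h21, h22, h23, h24, h25, h26, h27, h28⟩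
    refine ⟨H1 + H2, W1 + W2, h11.add h21, add_mem h12 h22,
      fun α => by rw [coeff_add]; exact add_mem (h13 α) (h23 α),
      by rw [map_add, h14, h24],
      h15.add h25, add_mem h16 h26, by rw [map_add, h17, h27], ?_⟩
    have : X (⟨m, hm⟩ : Fin n) * (H1 + H2) - C (a ⟨m, hm⟩) * (W1 + W2)
        = (X (⟨m, hm⟩ : Fin n) * H1 - C (a ⟨m, hm⟩) * W1)
          + (X (⟨m, hm⟩ : Fin n) * H2 - C (a ⟨m, hm⟩) * W2) := by ring
    rw [this]
    exact add_mem h18 h28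

lemma degree_add' (f g : Fin n →₀ ℕ) : (f + g).degree = f.degree + g.degree := by
  simp [Finsupp.degree_eq_weight_one, map_add]

lemma degree_single' (y : Fin n) : (Finsupp.single y 1).degree = 1 := by
  rw [Finsupp.degree_single]

lemma single_add_sub {y : Fin n} {α : Fin n →₀ ℕ} (h : ¬ α y = 0) :
    Finsupp.single y 1 + (α - Finsupp.single y 1) = α := by
  ext i
  by_cases hiy : i = y
  · subst hiy
    rw [Finsupp.add_apply, Finsupp.tsub_apply, Finsupp.single_eq_same]
    omega
  · rw [Finsupp.add_apply, Finsupp.tsub_apply, Finsupp.single_eq_of_ne' (Ne.symm hiy)]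
    omega

lemma split (y : Fin n) {s : Set (Fin n)} {e : ℕ} (F : MvPolynomial (Fin n) A)
    (hhom : F.IsHomogeneous (e + 1)) (hsup : F ∈ supported A s) :
    ∃ G H : MvPolynomial (Fin n) A, F = G + X y * H ∧
      G.IsHomogeneous (e + 1) ∧ G ∈ supported A (s \ {y}) ∧
      H.IsHomogeneous e ∧ H ∈ supported A s := by
  classical
  refine ⟨∑ α ∈ F.support.filter fun α => α y = 0, monomial α (coeff α F),
    ∑ α ∈ F.support.filter fun α => ¬ α y = 0,
      monomial (α - Finsupp.single y 1) (coeff α F), ?_, ?_, ?_, ?_, ?_⟩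
  · rw [Finset.mul_sum]
    have hterm : ∀ α ∈ F.support.filter fun α => ¬ α y = 0,
        (X y : MvPolynomial (Fin n) A) * monomial (α - Finsupp.single y 1) (coeff α F)
          = monomial α (coeff α F) := by
      intro α hα
      have hαy : ¬ α y = 0 := (Finset.mem_filter.mp hα).2
      have hX : (X y : MvPolynomial (Fin n) A) = monomial (Finsupp.single y 1) 1 := rfl
      rw [hX, monomial_mul, single_add_sub hαy, one_mul]
    rw [Finset.sum_congr rfl hterm, Finset.sum_filter_add_sum_filter_not]
    exact F.as_sum
  · refine IsHomogeneous.sum _ _ _ fun α hα => isHomogeneous_monomial _ ?_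
    exact degree_of_coeff_ne_zero hhom
      (mem_support_iff.mp (Finset.mem_filter.mp hα).1)
  · refine Subalgebra.sum_mem _ fun α hα => monomial_mem_supported _ fun i hi => ?_
    obtain ⟨hαF, hαy⟩ := Finset.mem_filter.mp hα
    have his : i ∈ s := mem_vSet_of_supported hsup hαF hi
    have hiy : i ≠ y := by
      intro h; subst h
      exact Finsupp.mem_support_iff.mp hi hαy
    exact ⟨his, hiy⟩
  · refine IsHomogeneous.sum _ _ _ fun α hα => isHomogeneous_monomial _ ?_
    obtain ⟨hαF, hαy⟩ := Finset.mem_filter.mp hα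
    have h1 : α.degree = e + 1 :=
      degree_of_coeff_ne_zero hhom (mem_support_iff.mp hαF)
    have h2 := congrArg Finsupp.degree (single_add_sub hαy)
    rw [degree_add', degree_single'] at h2
    omega
  · refine Subalgebra.sum_mem _ fun α hα => monomial_mem_supported _ fun i hi => ?_
    obtain ⟨hαF, hαy⟩ := Finset.mem_filter.mp hα
    have hαi : α i ≠ 0 := by
      have := Finsupp.mem_support_iff.mp hi
      rw [Finsupp.tsub_apply] at this
      omega
    exact mem_vSet_of_supported hsup hαF (Finsupp.mem_support_iff.mpr hαi)

open RingTheory.Sequence in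
lemma reg_of_weaklyRegular {a : Fin n → A} (hw : IsWeaklyRegular A (List.ofFn a))
    {m : ℕ} (hm : m < n) {x : A} (hx : a ⟨m, hm⟩ * x ∈ pIdeal a m) : x ∈ pIdeal a m := by
  have hlen : m < (List.ofFn a).length := by simpa using hm
  have h' := (isWeaklyRegular_iff_Fin A _).mp hw ⟨m, hlen⟩
  have hel : (List.ofFn a)[(⟨m, hlen⟩ : Fin (List.ofFn a).length)] = a ⟨m, hm⟩ := by
    simp [List.getElem_ofFn]
  have hI : Ideal.ofList (List.take ((⟨m, hlen⟩ : Fin (List.ofFn a).length) : ℕ) (List.ofFn a))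
      = pIdeal a m := by
    show Ideal.span _ = Ideal.span _
    congr 1
    ext t
    simp only [Set.mem_setOf_eq, Set.mem_image, Set.mem_setOf_eq, List.mem_iff_getElem]
    constructor
    · rintro ⟨k, hk, rfl⟩
      have hk' : k < m ∧ k < n := by
        simp only [List.length_take, List.length_ofFn, lt_min_iff] at hk
        exact hk
      refine ⟨⟨k, hk'.2⟩, hk'.1, ?_⟩
      simp [List.getElem_take, List.getElem_ofFn]
    · rintro ⟨i, hi, rfl⟩
      refine ⟨(i : ℕ), ?_, ?_⟩
      · simp only [List.length_take, List.length_ofFn, lt_min_iff]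
        exact ⟨hi, i.isLt⟩
      · simp [List.getElem_take, List.getElem_ofFn]
  rw [hel, hI] at h'
  have hIT : (pIdeal a m • ⊤ : Submodule A A) = pIdeal a m := by
    rw [smul_eq_mul, Ideal.mul_top]
  have h0 : a ⟨m, hm⟩ • (Submodule.Quotient.mk x : A ⧸ (pIdeal a m • ⊤ : Submodule A A))
      = a ⟨m, hm⟩ • (0 : A ⧸ (pIdeal a m • ⊤ : Submodule A A)) := by
    rw [smul_zero, ← Submodule.Quotient.mk_smul, Submodule.Quotient.mk_eq_zero, hIT,
      smul_eq_mul]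
    exact hx
  have := h' h0
  rwa [Submodule.Quotient.mk_eq_zero, hIT] at this

lemma quasireg (a : Fin n → A) {m : ℕ} (hm : m < n)
    (hL : ∀ (d : ℕ) (F : MvPolynomial (Fin n) A), F.IsHomogeneous d →
      F ∈ supported A (vSet n m) → MvPolynomial.aeval a F = 0 → F ∈ kIdeal a m)
    {d : ℕ} {F : MvPolynomial (Fin n) A} (hhom : F.IsHomogeneous d)
    (hsup : F ∈ supported A (vSet n m))
    (hev : MvPolynomial.aeval a F ∈ pIdeal a m ^ (d + 1)) (α : Fin n →₀ ℕ) :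
    coeff α F ∈ pIdeal a m := by
  obtain ⟨H, -, hH1, hH2, hH3, hH4, -, -, -⟩ :
      ∃ H W : MvPolynomial (Fin n) A, H.IsHomogeneous d ∧ H ∈ supported A (vSet n m) ∧
        (∀ β, coeff β H ∈ pIdeal a m) ∧ MvPolynomial.aeval a H = MvPolynomial.aeval a F ∧
        W.IsHomogeneous (d + 1) ∧ W ∈ supported A (vSet n m) ∧
        MvPolynomial.aeval a W = MvPolynomial.aeval a F ∧
        X (⟨m, hm⟩ : Fin n) * H - C (a ⟨m, hm⟩) * W ∈ kIdeal a (m + 1) := by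
    obtain ⟨H, W, h1, h2, h3, h4, h5, h6, h7, h8⟩ := descent a hm hev
    exact ⟨H, W, h1, h2, h3, h4, h5, h6, h7, h8⟩
  have hker : F - H ∈ kIdeal a m :=
    hL d (F - H) (hhom.sub hH1) (sub_mem hsup hH2) (by rw [map_sub, hH4, sub_self])
  have h1 := coeff_mem_of_mem_kIdeal hker α
  have h2 : coeff α F = coeff α (F - H) + coeff α H := by
    rw [coeff_sub]; ring
  rw [h2]
  exact add_mem h1 (hH3 α)

lemma colon (a : Fin n → A) {m : ℕ} (hm : m < n)
    (hreg : ∀ x : A, a ⟨m, hm⟩ * x ∈ pIdeal a m → x ∈ pIdeal a m)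
    (hL : ∀ (d : ℕ) (F : MvPolynomial (Fin n) A), F.IsHomogeneous d →
      F ∈ supported A (vSet n m) → MvPolynomial.aeval a F = 0 → F ∈ kIdeal a m)
    {d : ℕ} {x : A} (hx : a ⟨m, hm⟩ * x ∈ pIdeal a m ^ d) : x ∈ pIdeal a m ^ d := by
  suffices h : ∀ j, j ≤ d → x ∈ pIdeal a m ^ j from h d le_rfl
  intro j
  induction j with
  | zero => intro _; simp [Ideal.one_eq_top]
  | succ j ih =>
    intro hj1
    have hxj := ih (Nat.le_of_succ_le hj1)
    obtain ⟨P, hP1, hP2, hP3⟩ := exists_homogeneous_rep a m j hxj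
    have hCP : (C (a ⟨m, hm⟩) * P).IsHomogeneous j := by
      simpa using (isHomogeneous_C (Fin n) (a ⟨m, hm⟩)).mul hP1
    have hCPsup : C (a ⟨m, hm⟩) * P ∈ supported A (vSet n m) :=
      Subalgebra.mul_mem _ (by
        rw [← MvPolynomial.algebraMap_eq]; exact Subalgebra.algebraMap_mem _ _) hP2
    have hCPev : MvPolynomial.aeval a (C (a ⟨m, hm⟩) * P) ∈ pIdeal a m ^ (j + 1) := by
      rw [map_mul, aeval_C, hP3]
      exact Ideal.pow_le_pow_right hj1 (by simpa using hx)
    have hco := quasireg a hm hL hCP hCPsup hCPev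
    have hcoP : ∀ β, coeff β P ∈ pIdeal a m := by
      intro β
      refine hreg _ ?_
      have := hco β
      rwa [coeff_C_mul] at this
    have := aeval_mem_of_homogeneous a hP1 hP2 hcoP
    rw [hP3] at this
    rw [pow_succ']
    exact this

lemma main (a : Fin n → A) (hw : RingTheory.Sequence.IsWeaklyRegular A (List.ofFn a)) :
    ∀ m, m ≤ n → ∀ (d : ℕ) (F : MvPolynomial (Fin n) A), F.IsHomogeneous d →
      F ∈ supported A (vSet n m) → MvPolynomial.aeval a F = 0 → F ∈ kIdeal a m := by
  intro m
  induction m with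
  | zero =>
    intro _ d F hhom hsup hev
    have hvs : vSet n 0 = ∅ := by ext i; simp [vSet]
    rw [hvs, supported_empty, Algebra.mem_bot] at hsup
    obtain ⟨c, rfl⟩ := hsup
    have hc : c = 0 := by simpa using hev
    rw [hc, map_zero]
    exact zero_mem _
  | succ m ih =>
    intro hm1
    have hm : m < n := Nat.lt_of_succ_le hm1
    have outer := ih (le_of_lt hm)
    have hreg : ∀ x : A, a ⟨m, hm⟩ * x ∈ pIdeal a m → x ∈ pIdeal a m :=
      fun x hx => reg_of_weaklyRegular hw hm hx
    intro d
    induction d with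
    | zero =>
      intro F hhom hsup hev
      have hF : F = C (coeff 0 F) := by
        apply MvPolynomial.ext
        intro α
        by_cases hα : α = 0
        · subst hα; simp
        · rw [hhom.coeff_eq_zero (by
            rw [Ne, Finsupp.degree_eq_zero_iff]; exact hα), coeff_C, if_neg (Ne.symm hα)]
      have hc : coeff 0 F = 0 := by
        rw [hF] at hev; simpa using hev
      rw [hF, hc, map_zero]
      exact zero_mem _
    | succ e ihd =>
      intro F hhom hsup hev
      obtain ⟨G, H, hsplit, hGhom, hGsup, hHhom, hHsup⟩ :=
        split (⟨m, hm⟩ : Fin n) F hhom hsup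
      have hset : vSet n (m + 1) \ {(⟨m, hm⟩ : Fin n)} = vSet n m := by
        ext i
        simp only [vSet, Set.mem_diff, Set.mem_setOf_eq, Set.mem_singleton_iff, Fin.ext_iff]
        omega
      rw [hset] at hGsup
      have hevG : MvPolynomial.aeval a G ∈ pIdeal a m ^ (e + 1) :=
        aeval_mem_pow a hGhom hGsup
      have hev' : MvPolynomial.aeval a G
          + a ⟨m, hm⟩ * MvPolynomial.aeval a H = 0 := by
        rw [hsplit] at hev
        simpa [map_add, map_mul, aeval_X] using hev
      have hbH : a ⟨m, hm⟩ * MvPolynomial.aeval a H ∈ pIdeal a m ^ (e + 1) := by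
        have heq : a ⟨m, hm⟩ * MvPolynomial.aeval a H = - MvPolynomial.aeval a G :=
          eq_neg_of_add_eq_zero_right hev'
        rw [heq]
        exact neg_mem hevG
      have hH' : MvPolynomial.aeval a H ∈ pIdeal a m ^ (e + 1) :=
        colon a hm hreg outer hbH
      obtain ⟨H', W, h1, h2, h3, h4, h5, h6, h7, h8⟩ := descent a hm hH'
      have hsub : vSet n m ⊆ vSet n (m + 1) := fun i hi => Nat.lt_succ_of_lt hi
      have hHH' : H - H' ∈ kIdeal a (m + 1) :=
        ihd (H - H') (hHhom.sub h1) (sub_mem hHsup (supported_mono hsub h2))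
          (by rw [map_sub, h4, sub_self])
      have hWsup : C (a ⟨m, hm⟩) * W ∈ supported A (vSet n m) :=
        Subalgebra.mul_mem _ (by
          rw [← MvPolynomial.algebraMap_eq]; exact Subalgebra.algebraMap_mem _ _) h6
      have hF' : G + C (a ⟨m, hm⟩) * W ∈ kIdeal a m := by
        refine outer (e + 1) _ (hGhom.add (by
          simpa using (isHomogeneous_C (Fin n) (a ⟨m, hm⟩)).mul h5))
          (add_mem hGsup hWsup) ?_
        rw [map_add, map_mul, aeval_C, h7]
        simpa using hev'
      have hdecomp : F = (G + C (a ⟨m, hm⟩) * W) + X (⟨m, hm⟩ : Fin n) * (H - H')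
          + (X (⟨m, hm⟩ : Fin n) * H' - C (a ⟨m, hm⟩) * W) := by
        rw [hsplit]; ring
      rw [hdecomp]
      exact add_mem (add_mem (kIdeal_mono a (Nat.le_succ m) hF')
        (Ideal.mul_mem_left _ _ hHH')) h8

noncomputable def phi (a : Fin n → A) : MvPolynomial (Fin n) A →ₐ[A] Polynomial A :=
  MvPolynomial.aeval fun i => Polynomial.monomial 1 (a i)

lemma prod_monomial (a : Fin n → A) (α : Fin n → ℕ) (t : Finset (Fin n)) :
    (∏ i ∈ t, (Polynomial.monomial 1 (a i)) ^ (α i))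
      = Polynomial.monomial (∑ i ∈ t, α i) (∏ i ∈ t, a i ^ α i) := by
  classical
  induction t using Finset.induction_on with
  | empty => simp
  | @insert j t' hns ih =>
    rw [Finset.prod_insert hns, Finset.sum_insert hns, Finset.prod_insert hns, ih,
      Polynomial.monomial_pow, one_mul, Polynomial.monomial_mul_monomial]

lemma phi_monomial (a : Fin n → A) (α : Fin n →₀ ℕ) (c : A) :
    phi a (monomial α c)
      = Polynomial.monomial α.degree (c * ∏ i ∈ α.support, a i ^ α i) := by
  show MvPolynomial.aeval _ _ = _
  rw [aeval_monomial, Finsupp.prod, prod_monomial, Polynomial.algebraMap_eq,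
    Polynomial.C_mul_monomial]
  rfl

lemma phi_coeff (a : Fin n → A) (F : MvPolynomial (Fin n) A) (k : ℕ) :
    (phi a F).coeff k = MvPolynomial.aeval a (homogeneousComponent k F) := by
  induction F using MvPolynomial.induction_on' with
  | monomial α c =>
    rw [phi_monomial, Polynomial.coeff_monomial]
    have hmem : (monomial α c) ∈ homogeneousSubmodule (Fin n) A α.degree :=
      (mem_homogeneousSubmodule _ _).mpr (isHomogeneous_monomial _ rfl)
    rw [homogeneousComponent_of_mem hmem]
    by_cases h : α.degree = k
    · rw [if_pos h, if_pos h.symm, aeval_monomial]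
      simp [Finsupp.prod]
    · rw [if_neg h, if_neg (Ne.symm h), map_zero]
  | add p q ihp ihq =>
    rw [map_add, Polynomial.coeff_add, ihp, ihq, map_add, map_add]

lemma pIdeal_top (a : Fin n → A) : pIdeal a n = Ideal.span (Set.range a) := by
  unfold pIdeal
  congr 1
  have h : {i : Fin n | (i : ℕ) < n} = Set.univ := by ext i; simp [i.isLt]
  rw [h, Set.image_univ]

lemma vSet_top : vSet n n = Set.univ := by ext i; simp [vSet, i.isLt]

lemma mem_supported_top (F : MvPolynomial (Fin n) A) : F ∈ supported A (vSet n n) := by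
  rw [vSet_top, supported_univ]
  trivial

lemma phi_mem_rees (a : Fin n → A) (F : MvPolynomial (Fin n) A) :
    phi a F ∈ reesAlgebra (Ideal.span (Set.range a)) := by
  rw [mem_reesAlgebra_iff]
  intro k
  rw [phi_coeff, ← pIdeal_top a]
  exact aeval_mem_pow a (homogeneousComponent_isHomogeneous k F) (mem_supported_top _)

lemma phi_of_homogeneous (a : Fin n → A) {P : MvPolynomial (Fin n) A} {k : ℕ}
    (h : P.IsHomogeneous k) :
    phi a P = Polynomial.monomial k (MvPolynomial.aeval a P) := by
  apply Polynomial.ext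
  intro j
  rw [phi_coeff, Polynomial.coeff_monomial,
    homogeneousComponent_of_mem ((mem_homogeneousSubmodule _ _).mpr h)]
  by_cases hj : j = k
  · rw [if_pos hj, if_pos hj.symm]
  · rw [if_neg hj, if_neg (Ne.symm hj), map_zero]

lemma phi_surj (a : Fin n → A) (p : Polynomial A)
    (hp : p ∈ reesAlgebra (Ideal.span (Set.range a))) :
    ∃ F, phi a F = p := by
  classical
  have hrep : ∀ k : ℕ, ∃ P : MvPolynomial (Fin n) A, P.IsHomogeneous k ∧
      P ∈ supported A (vSet n n) ∧ MvPolynomial.aeval a P = p.coeff k := by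
    intro k
    refine exists_homogeneous_rep a n k ?_
    rw [pIdeal_top a]
    exact (mem_reesAlgebra_iff _ _).mp hp k
  choose P h1 h2 h3 using hrep
  refine ⟨∑ k ∈ p.support, P k, ?_⟩
  rw [map_sum]
  conv_rhs => rw [p.as_sum_support]
  exact Finset.sum_congr rfl fun k _ => by rw [phi_of_homogeneous a (h1 k), h3]

lemma phi_gen_zero (a : Fin n → A) (i j : Fin n) :
    phi a (C (a i) * X j - C (a j) * X i) = 0 := by
  show MvPolynomial.aeval _ _ = _
  rw [map_sub, map_mul, map_mul, aeval_X, aeval_X, aeval_C, aeval_C,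
    Polynomial.algebraMap_eq, Polynomial.C_mul_monomial, Polynomial.C_mul_monomial,
    mul_comm (a i) (a j), sub_self]

lemma ker_phi_le (a : Fin n → A)
    (hw : RingTheory.Sequence.IsWeaklyRegular A (List.ofFn a))
    {F : MvPolynomial (Fin n) A} (hF : phi a F = 0) :
    F ∈ kIdeal a n := by
  rw [← MvPolynomial.sum_homogeneousComponent F]
  refine Ideal.sum_mem _ fun k _ => ?_
  refine main a hw n le_rfl k _ (homogeneousComponent_isHomogeneous k F)
    (mem_supported_top _) ?_
  rw [← phi_coeff, hF, Polynomial.coeff_zero]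

end ReesPresentationAux

open Polynomial

lemma monomial_one_mem_reesAlgebra {A : Type*} [CommRing A] (I : Ideal A) {a : A} (ha : a ∈ I) :
    Polynomial.monomial 1 a ∈ reesAlgebra I :=
  reesAlgebra.monomial_mem.mpr (by simpa using ha)

theorem rees_algebra_presentation_of_regular_sequence {A : Type*} [CommRing A] (r : ℕ)
    (a : Fin (r + 1) → A) (hreg : RingTheory.Sequence.IsRegular A (List.ofFn a)) :
    ∃ e : (MvPolynomial (Fin (r + 1)) A ⧸
        Ideal.span {p : MvPolynomial (Fin (r + 1)) A |
          ∃ i j : Fin (r + 1), p =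
            MvPolynomial.C (a i) * MvPolynomial.X j - MvPolynomial.C (a j) * MvPolynomial.X i})
        ≃ₐ[A] reesAlgebra (Ideal.span (Set.range a)),
      ∀ i : Fin (r + 1),
        e (Ideal.Quotient.mk _ (MvPolynomial.X i)) =
          ⟨Polynomial.monomial 1 (a i),
            monomial_one_mem_reesAlgebra _ (Ideal.subset_span ⟨i, rfl⟩)⟩ := by
  classical
  have hw := hreg.toIsWeaklyRegular
  let φ' : MvPolynomial (Fin (r + 1)) A →ₐ[A] reesAlgebra (Ideal.span (Set.range a)) :=
    AlgHom.codRestrict (ReesPresentationAux.phi a) _ (ReesPresentationAux.phi_mem_rees a)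
  have hval : ∀ F, ((φ' F : reesAlgebra (Ideal.span (Set.range a))) : Polynomial A)
      = ReesPresentationAux.phi a F := fun F => rfl
  have hsurj : Function.Surjective φ' := by
    rintro ⟨p, hp⟩
    obtain ⟨F, hF⟩ := ReesPresentationAux.phi_surj a p hp
    exact ⟨F, Subtype.ext (by rw [hval, hF])⟩
  have hkerideal : Ideal.span {p : MvPolynomial (Fin (r + 1)) A |
        ∃ i j : Fin (r + 1), p = MvPolynomial.C (a i) * MvPolynomial.X j
          - MvPolynomial.C (a j) * MvPolynomial.X i} = RingHom.ker φ' := by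
    apply le_antisymm
    · rw [Ideal.span_le]
      rintro q ⟨i, j, rfl⟩
      rw [SetLike.mem_coe, RingHom.mem_ker]
      exact Subtype.ext (by rw [hval, ReesPresentationAux.phi_gen_zero]; rfl)
    · intro F hF
      rw [RingHom.mem_ker] at hF
      have h0 : ReesPresentationAux.phi a F = 0 := by
        rw [← hval F, hF]
        rfl
      have hmem := ReesPresentationAux.ker_phi_le a hw h0
      have hle : ReesPresentationAux.kIdeal a (r + 1) ≤
          Ideal.span {p : MvPolynomial (Fin (r + 1)) A |
          ∃ i j : Fin (r + 1), p = MvPolynomial.C (a i) * MvPolynomial.X j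
            - MvPolynomial.C (a j) * MvPolynomial.X i} := by
        unfold ReesPresentationAux.kIdeal
        apply Ideal.span_mono
        rintro p ⟨i, j, -, -, rfl⟩
        exact ⟨i, j, rfl⟩
      exact hle hmem
  refine ⟨(Ideal.quotientEquivAlgOfEq A hkerideal).trans
    (Ideal.quotientKerAlgEquivOfSurjective hsurj), fun i => ?_⟩
  have h1 : (Ideal.quotientEquivAlgOfEq A hkerideal).trans
      (Ideal.quotientKerAlgEquivOfSurjective hsurj)
      (Ideal.Quotient.mk _ (MvPolynomial.X i)) = φ' (MvPolynomial.X i) := by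
    rw [AlgEquiv.trans_apply, Ideal.quotientEquivAlgOfEq_mk]
    rfl
  rw [h1]
  apply Subtype.ext
  rw [hval]
  show MvPolynomial.aeval _ _ = _
  rw [MvPolynomial.aeval_X]
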